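/- arXiv:1906.06373 — 2 statements merged into one kernel-verified Lean document; each statement's English description precedes it below -/
import Mathlib

section
/- Let f be a formal power series over ℚ with f(0)=0, f'(0)=1, and let φ = Rev(x²/f(x)). If (x²/f(x)) composed with itself under the substitution x ↦ -x satisfies x²/f(x) = Rev(x²/(-f(-x))), then the compositional inverse of φ equals -φ(-x). -/
open PowerSeries

/-- Composition `f ∘ a` of formal power series (intended for `a` with zero constant term). -/
noncomputable def psComp {R : Type*} [CommRing R] (f a : R⟦X⟧) : R⟦X⟧ :=
  PowerSeries.mk fun n => ∑ i ∈ Finset.range (n + 1), PowerSeries.coeff i f * PowerSeries.coeff n (a ^ i)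

section Aux
open Finset
variable {R : Type*} [CommRing R]

lemma coeff_pow_zero {a : R⟦X⟧} (ha : constantCoeff a = 0) {n i : ℕ} (h : n < i) :
    coeff n (a ^ i) = 0 := by
  have h1 : (X : R⟦X⟧) ∣ a := X_dvd_iff.mpr ha
  have h2 : (X : R⟦X⟧) ^ i ∣ a ^ i := pow_dvd_pow_of_dvd h1 i
  exact X_pow_dvd_iff.mp h2 n h

lemma coeff_psComp' (f a : R⟦X⟧) (n : ℕ) :
    coeff n (psComp f a) = ∑ i ∈ range (n + 1), coeff i f * coeff n (a ^ i) := by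
  rw [psComp, coeff_mk]

lemma coeff_psComp {a : R⟦X⟧} (ha : constantCoeff a = 0) (f : R⟦X⟧) {n N : ℕ} (h : n < N) :
    coeff n (psComp f a) = ∑ i ∈ range N, coeff i f * coeff n (a ^ i) := by
  rw [psComp, coeff_mk]
  apply Finset.sum_subset (Finset.range_subset_range.mpr h)
  intro i hi hni
  simp only [mem_range] at hi hni
  rw [coeff_pow_zero ha (by omega), mul_zero]

lemma coeff_eval₂ {a : R⟦X⟧} (ha : constantCoeff a = 0) (p : Polynomial R) (n : ℕ) :
    coeff n (p.eval₂ C a) = ∑ i ∈ range (n + 1), p.coeff i * coeff n (a ^ i) := by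
  rw [Polynomial.eval₂_eq_sum_range' C (n := max (n + 1) (p.natDegree + 1))
    (lt_of_lt_of_le (Nat.lt_succ_self _) (le_max_right _ _)) a]
  rw [map_sum]
  simp only [coeff_C_mul]
  symm
  apply Finset.sum_subset (Finset.range_subset_range.mpr (le_max_left _ _))
  intro i hi hni
  simp only [mem_range] at hi hni
  rw [coeff_pow_zero ha (by omega), mul_zero]

lemma psComp_eq_trunc {a : R⟦X⟧} (ha : constantCoeff a = 0) (f : R⟦X⟧) {n N : ℕ} (h : n < N) :
    coeff n (psComp f a) = coeff n ((trunc N f).eval₂ C a) := by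
  rw [coeff_eval₂ ha, coeff_psComp ha f (Nat.lt_succ_self n)]
  apply Finset.sum_congr rfl
  intro i hi
  simp only [mem_range] at hi
  rw [coeff_trunc, if_pos (by omega)]

lemma psComp_mul {a : R⟦X⟧} (ha : constantCoeff a = 0) (f g : R⟦X⟧) :
    psComp (f * g) a = psComp f a * psComp g a := by
  ext n
  rw [psComp_eq_trunc ha _ (Nat.lt_succ_self n)]
  have key : coeff n (((trunc (n+1) (f*g)).eval₂ C a)) =
      coeff n (((trunc (n+1) f * trunc (n+1) g).eval₂ C a)) := by
    rw [coeff_eval₂ ha, coeff_eval₂ ha]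
    apply Finset.sum_congr rfl
    intro i hi
    simp only [mem_range] at hi
    congr 1
    rw [coeff_trunc, if_pos (by omega), coeff_mul_eq_coeff_trunc_mul_trunc f g (show i < n+1 by omega)]
    rw [← Polynomial.coeff_coe, Polynomial.coe_mul]
  rw [key, Polynomial.eval₂_mul, coeff_mul, coeff_mul]
  apply Finset.sum_congr rfl
  intro p hp
  rw [Finset.HasAntidiagonal.mem_antidiagonal] at hp
  rw [psComp_eq_trunc ha f (show p.1 < n+1 by omega), psComp_eq_trunc ha g (show p.2 < n+1 by omega)]

lemma psComp_one (a : R⟦X⟧) : psComp 1 a = 1 := by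
  ext n
  rw [psComp, coeff_mk]
  rw [Finset.sum_eq_single 0]
  · simp
  · intro i hi hne
    rw [coeff_one, if_neg hne, zero_mul]
  · simp

lemma psComp_pow {a : R⟦X⟧} (ha : constantCoeff a = 0) (f : R⟦X⟧) (k : ℕ) :
    psComp (f ^ k) a = (psComp f a) ^ k := by
  induction k with
  | zero => simpa using psComp_one a
  | succ k ih => rw [pow_succ, pow_succ, psComp_mul ha, ih]

lemma psComp_assoc {a b : R⟦X⟧} (ha : constantCoeff a = 0) (hb : constantCoeff b = 0)
    (f : R⟦X⟧) : psComp (psComp f a) b = psComp f (psComp a b) := by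
  ext n
  rw [coeff_psComp' (psComp f a) b n, coeff_psComp' f (psComp a b) n]
  calc ∑ j ∈ range (n+1), coeff j (psComp f a) * coeff n (b ^ j)
      = ∑ j ∈ range (n+1), ∑ i ∈ range (n+1), coeff i f * coeff j (a ^ i) * coeff n (b ^ j) := by
        apply Finset.sum_congr rfl
        intro j hj
        simp only [mem_range] at hj
        rw [coeff_psComp ha f (show j < n+1 by omega), Finset.sum_mul]
    _ = ∑ i ∈ range (n+1), ∑ j ∈ range (n+1), coeff i f * (coeff j (a ^ i) * coeff n (b ^ j)) := by
        rw [Finset.sum_comm]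
        apply Finset.sum_congr rfl; intro i _
        apply Finset.sum_congr rfl; intro j _
        ring
    _ = ∑ i ∈ range (n+1), coeff i f * coeff n ((psComp a b) ^ i) := by
        apply Finset.sum_congr rfl
        intro i hi
        rw [← Finset.mul_sum, ← psComp_pow hb, coeff_psComp' (a ^ i) b n]

lemma psComp_X_left {a : R⟦X⟧} (ha : constantCoeff a = 0) : psComp X a = a := by
  ext n
  rw [psComp, coeff_mk, Finset.sum_eq_single 1]
  · simp
  · intro i hi hne
    rw [coeff_X, if_neg hne, zero_mul]
  · intro h
    simp only [mem_range, not_lt] at h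
    have hn : n = 0 := by omega
    subst hn
    simp [ha]

lemma psComp_X_right (f : R⟦X⟧) : psComp f X = f := by
  ext n
  rw [psComp, coeff_mk, Finset.sum_eq_single n]
  · simp
  · intro i hi hne
    rw [coeff_X_pow, if_neg (fun h => hne h.symm), mul_zero]
  · simp

end Aux

theorem stmt6 (f q φ r : ℚ⟦X⟧)
    (hf0 : PowerSeries.constantCoeff f = 0)
    (hf1 : PowerSeries.coeff 1 f = 1)
    (hq : q * f = X ^ 2) (hq0 : PowerSeries.constantCoeff q = 0)
    (hφ0 : PowerSeries.constantCoeff φ = 0)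
    (hφ : psComp q φ = X)
    (hr : r * (-(PowerSeries.rescale (-1) f)) = X ^ 2)
    (hr0 : PowerSeries.constantCoeff r = 0)
    (hcond : psComp r q = X) :
    psComp φ (-(PowerSeries.rescale (-1) φ)) = X := by
  have hφr : φ = r := by
    have h1 : psComp (psComp r q) φ = psComp r (psComp q φ) := psComp_assoc hq0 hφ0 r
    rw [hcond, hφ, psComp_X_left hφ0, psComp_X_right] at h1
    exact h1
  have hneg : r = -(rescale (-1) q) := by
    have h2 : (-(rescale (-1) q)) * (-(rescale (-1) f)) = X ^ 2 := by
      have h3 := congrArg (rescale (-1)) hq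
      rw [map_mul] at h3
      have hX2 : rescale (-1 : ℚ) (X ^ 2) = X ^ 2 := by
        rw [map_pow, rescale_neg_one_X]; ring
      rw [hX2] at h3
      calc (-(rescale (-1) q)) * (-(rescale (-1) f)) = rescale (-1) q * rescale (-1) f := by ring
        _ = X ^ 2 := h3
    have hfne : (-(rescale (-1) f)) ≠ 0 := by
      intro h
      have h4 : coeff 1 (-(rescale (-1) f)) = 0 := by rw [h]; simp
      rw [map_neg, coeff_rescale] at h4
      simp [hf1] at h4
    exact mul_right_cancel₀ hfne (hr.trans h2.symm)
  have hφq : -(rescale (-1) φ) = q := by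
    rw [hφr, hneg, map_neg, neg_neg, rescale_rescale,
      show ((-1 : ℚ) * -1) = 1 by norm_num, rescale_one]
    rfl
  rw [hφq, hφr]
  exact hcond
end

section
/- Let c(x) = (1-√(1-4x))/(2x) be the Catalan generating function over ℚ, and let f(x) = x/(1-x), g(x) = (1-2x)/(1-x)², φ(x) = x·c(x). Then φ = Rev(x²/f) (since x²/f = x(1-x)) and φ(x)·φ'(x)·g(φ(x))/f(φ(x)) = c(x). -/
open PowerSeries

section aux
variable {a : ℚ⟦X⟧}

lemma coeff_pow_zero_of_lt (ha : PowerSeries.constantCoeff a = 0) (i n : ℕ) (h : n < i) :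
    PowerSeries.coeff n (a ^ i) = 0 := by
  have hX : (X : ℚ⟦X⟧) ∣ a := PowerSeries.X_dvd_iff.2 ha
  exact (PowerSeries.X_pow_dvd_iff.1 (pow_dvd_pow_of_dvd hX i)) n h

/-- Key: the `n`-th coefficient of `psComp F a` equals that of evaluating any polynomial
agreeing with `F` up to degree `n`. -/
lemma coeff_psComp_eq (ha : PowerSeries.constantCoeff a = 0) (n : ℕ) (F : ℚ⟦X⟧)
    (p : Polynomial ℚ) (hp : ∀ i ≤ n, p.coeff i = PowerSeries.coeff i F) :
    PowerSeries.coeff n (psComp F a) = PowerSeries.coeff n (p.eval₂ (PowerSeries.C) a) := by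
  classical
  set N := max (n + 1) (p.natDegree + 1) with hN
  have hdeg : p.natDegree < N := lt_of_lt_of_le (Nat.lt_succ_self _) (le_max_right _ _)
  have hnN : n + 1 ≤ N := le_max_left _ _
  rw [Polynomial.eval₂_eq_sum_range' _ hdeg, map_sum]
  have hrhs : ∀ i ∈ Finset.range N,
      PowerSeries.coeff n (PowerSeries.C (p.coeff i) * a ^ i)
        = p.coeff i * PowerSeries.coeff n (a ^ i) := fun i _ => by
    rw [PowerSeries.coeff_C_mul]
  rw [Finset.sum_congr rfl hrhs,
    ← Finset.sum_subset (Finset.range_subset_range.2 hnN) (fun i _ hi => by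
      have hni : n < i := by simp only [Finset.mem_range, not_lt] at hi; omega
      rw [coeff_pow_zero_of_lt ha i n hni, mul_zero])]
  rw [psComp, PowerSeries.coeff_mk]
  exact Finset.sum_congr rfl fun i hi => by
    rw [hp i (Nat.lt_succ_iff.1 (Finset.mem_range.1 hi))]

lemma coeff_psComp_trunc (ha : PowerSeries.constantCoeff a = 0) {m n : ℕ} (hmn : m ≤ n)
    (F : ℚ⟦X⟧) :
    PowerSeries.coeff m (psComp F a)
      = PowerSeries.coeff m ((PowerSeries.trunc (n + 1) F).eval₂ (PowerSeries.C) a) := by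
  apply coeff_psComp_eq ha m F
  intro i hi
  rw [PowerSeries.coeff_trunc, if_pos (by omega)]

lemma psComp_one_s18 (ha : PowerSeries.constantCoeff a = 0) : psComp 1 a = 1 := by
  ext n
  rw [coeff_psComp_eq ha n 1 1 (fun i _ => by simp [Polynomial.coeff_one, PowerSeries.coeff_one]),
    Polynomial.eval₂_one]

lemma psComp_X (ha : PowerSeries.constantCoeff a = 0) : psComp X a = a := by
  ext n
  rw [coeff_psComp_eq ha n X Polynomial.X
    (fun i _ => by simp [Polynomial.coeff_X, PowerSeries.coeff_X, eq_comm]),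
    Polynomial.eval₂_X]

lemma psComp_add (F G : ℚ⟦X⟧) : psComp (F + G) a = psComp F a + psComp G a := by
  ext n
  simp [psComp, add_mul, Finset.sum_add_distrib]

lemma psComp_sub (F G : ℚ⟦X⟧) : psComp (F - G) a = psComp F a - psComp G a := by
  ext n
  simp [psComp, sub_mul, Finset.sum_sub_distrib]

lemma psComp_mul_s18 (ha : PowerSeries.constantCoeff a = 0) (F G : ℚ⟦X⟧) :
    psComp (F * G) a = psComp F a * psComp G a := by
  ext n
  have key : ∀ H : ℚ⟦X⟧, ∀ m ≤ n, PowerSeries.coeff m (psComp H a)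
      = PowerSeries.coeff m ((PowerSeries.trunc (n + 1) H).eval₂ (PowerSeries.C) a) :=
    fun H m hm => coeff_psComp_trunc ha hm H
  rw [key (F * G) n le_rfl]
  have h1 : PowerSeries.coeff n ((PowerSeries.trunc (n+1) (F * G)).eval₂ (PowerSeries.C) a)
      = PowerSeries.coeff n
        ((PowerSeries.trunc (n+1) F * PowerSeries.trunc (n+1) G).eval₂ (PowerSeries.C) a) := by
    rw [← PowerSeries.trunc_trunc_mul_trunc (f := F) (g := G) (n := n + 1)]
    rw [← coeff_psComp_eq ha n ((PowerSeries.trunc (n+1) F : ℚ⟦X⟧) * (PowerSeries.trunc (n+1) G : ℚ⟦X⟧))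
      (PowerSeries.trunc (n+1) F * PowerSeries.trunc (n+1) G) (fun i _ => by
        rw [← Polynomial.coeff_coe, Polynomial.coe_mul])]
    rw [coeff_psComp_trunc ha le_rfl]
  rw [h1, Polynomial.eval₂_mul, PowerSeries.coeff_mul, PowerSeries.coeff_mul]
  apply Finset.sum_congr rfl
  intro p hp
  have hpn := Finset.HasAntidiagonal.mem_antidiagonal.1 hp
  rw [← key F p.1 (by omega), ← key G p.2 (by omega)]

end aux

theorem stmt18 (s c : ℚ⟦X⟧)
    (hs : s ^ 2 = 1 - 4 * X) (hs0 : PowerSeries.constantCoeff s = 1)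
    (hc : 2 * X * c = 1 - s) :
    psComp (X * (1 - X)) (X * c) = X ∧
    (X * c) * PowerSeries.derivativeFun (X * c) *
        psComp ((1 - 2 * X) * ((1 - X : ℚ⟦X⟧)⁻¹) ^ 2) (X * c) =
      c * psComp (X * (1 - X : ℚ⟦X⟧)⁻¹) (X * c) := by
  set Φ : ℚ⟦X⟧ := X * c with hΦdef
  have ha : PowerSeries.constantCoeff Φ = 0 := by
    simp [hΦdef]
  -- Φ satisfies Φ² = Φ - X
  have hsΦ : s = 1 - 2 * Φ := by rw [hΦdef]; linear_combination hc
  have h40 : (4 : ℚ⟦X⟧) ≠ 0 := fun h => by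
    have h0 := congrArg (PowerSeries.constantCoeff) h
    simp only [map_ofNat, map_zero] at h0
    norm_num at h0
  have hΦ : Φ ^ 2 = Φ - X := by
    rw [hsΦ] at hs
    have h4 : (4 : ℚ⟦X⟧) * (Φ ^ 2 - (Φ - X)) = 0 := by linear_combination hs
    rcases mul_eq_zero.mp h4 with h | h
    · exact absurd h h40
    · exact sub_eq_zero.mp h
  -- psComp of the basic pieces
  have h1X : psComp (1 - X) Φ = 1 - Φ := by
    rw [psComp_sub, psComp_one_s18 ha, psComp_X ha]
  have h2 : psComp 2 Φ = 2 := by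
    have : (2 : ℚ⟦X⟧) = 1 + 1 := by norm_num
    rw [this, psComp_add, psComp_one_s18 ha]
  have h12X : psComp (1 - 2 * X) Φ = 1 - 2 * Φ := by
    rw [psComp_sub, psComp_one_s18 ha, psComp_mul_s18 ha, h2, psComp_X ha]
  -- inverse of 1 - X
  have hinv : (1 - X : ℚ⟦X⟧) * (1 - X : ℚ⟦X⟧)⁻¹ = 1 :=
    PowerSeries.mul_inv_cancel _ (by simp)
  set v : ℚ⟦X⟧ := psComp ((1 - X : ℚ⟦X⟧)⁻¹) Φ with hvdef
  have hv : (1 - Φ) * v = 1 := by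
    rw [hvdef, ← h1X, ← psComp_mul_s18 ha, hinv, psComp_one_s18 ha]
  -- derivative identity
  have hΦmul : Φ * Φ = Φ - X := by rw [← pow_two]; exact hΦ
  have hd : PowerSeries.derivativeFun Φ * (1 - 2 * Φ) = 1 := by
    have h := congrArg (PowerSeries.derivativeFun) hΦmul
    rw [PowerSeries.derivativeFun_mul] at h
    have hsub : PowerSeries.derivativeFun (Φ - X)
        = PowerSeries.derivativeFun Φ - PowerSeries.derivativeFun X := by
      have h' := PowerSeries.derivativeFun_add (Φ - X) X
      simp only [sub_add_cancel] at h'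
      linear_combination -h' 
    rw [hsub] at h
    have hX' : PowerSeries.derivativeFun (X : ℚ⟦X⟧) = 1 := by
      have := PowerSeries.derivative_X (R := ℚ)
      exact this
    rw [hX'] at h
    simp only [smul_eq_mul] at h
    linear_combination -h
  constructor
  · rw [psComp_mul_s18 ha, psComp_X ha, h1X]
    linear_combination -hΦ
  · rw [psComp_mul_s18 ha, psComp_mul_s18 ha, h12X, psComp_X ha, pow_two, psComp_mul_s18 ha,
      ← hvdef, ← pow_two]
    have h10 : ((1 : ℚ⟦X⟧) - Φ) ^ 2 ≠ 0 := by
      apply pow_ne_zero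
      intro h
      have := congrArg (PowerSeries.constantCoeff) h
      simp [ha] at this
    apply mul_right_cancel₀ h10
    rw [hΦdef]
    linear_combination (X * c * PowerSeries.derivativeFun (X * c) * (1 - 2 * (X * c)) *
        ((1 - X * c) * v + 1) - c * (X * c) * (1 - X * c)) * hv
      + (X * c) * hd + c * hΦ
end
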